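/- Suppose for each p there are an invertible symmetry γ_p (with γ_p(ξ(x₀,p,t)) = ξ(γ_p(x₀), p_v, t)) mapping mode p to the virtual mode p_v. Fix K' ⊆ ℝⁿ, T' ≥ 0, U' ⊆ ℝⁿ with Reach(K', p_v, [0,T']) ∩ U' = ∅ (a cached safe result). Then for any mode p ∈ P, any initial set K ⊆ ℝⁿ, any time bound 0 ≤ T ≤ T', and any unsafe set U ⊆ ℝⁿ, if K ⊆ γ_p⁻¹(K') and U ⊆ γ_p⁻¹(U'), then Reach(K, p, [0,T]) ∩ U = ∅. -/
import Mathlib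


/-- Reachable states over a time interval `[a, b]` of the flow `ξ` with parameter `p`. -/
def Reach {n : ℕ} {P : Type*} (ξ : (Fin n → ℝ) → P → ℝ → (Fin n → ℝ))
    (K : Set (Fin n → ℝ)) (p : P) (a b : ℝ) : Set (Fin n → ℝ) :=
  {x | ∃ x₀ ∈ K, ∃ t ∈ Set.Icc a b, x = ξ x₀ p t}

/-- Unbounded safety from a cached virtual-system check. Given invertible
symmetries `γ_p` mapping mode `p` to virtual mode `p_v`, and a cached safe result
`Reach K' p_v [0,T'] ∩ U' = ∅`, then for any mode `p`, initial set `K ⊆ γ_p⁻¹(K')`,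
time bound `0 ≤ T ≤ T'`, and unsafe set `U ⊆ γ_p⁻¹(U')`, we have `Reach K p [0,T] ∩ U = ∅`. -/
theorem stmt_10 {n : ℕ} {P : Type*}
    (ξ : (Fin n → ℝ) → P → ℝ → (Fin n → ℝ))
    (p_v : P)
    (γ : P → (Fin n → ℝ) ≃ (Fin n → ℝ))
    (hsym : ∀ (p : P) (x₀ : Fin n → ℝ) (t : ℝ), 0 ≤ t →
      γ p (ξ x₀ p t) = ξ (γ p x₀) p_v t)
    (K' U' : Set (Fin n → ℝ)) (T' : ℝ) (hT' : 0 ≤ T')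
    (hcache : Reach ξ K' p_v 0 T' ∩ U' = ∅) :
    ∀ (p : P) (K U : Set (Fin n → ℝ)) (T : ℝ), 0 ≤ T → T ≤ T' →
      K ⊆ (γ p).symm '' K' → U ⊆ (γ p).symm '' U' →
      Reach ξ K p 0 T ∩ U = ∅ := by
  intro p K U T hT hTT' hK hU
  ext x
  simp only [Set.mem_inter_iff, Set.mem_empty_iff_false, iff_false, not_and]
  rintro ⟨x₀, hx₀, t, ⟨ht0, htT⟩, rfl⟩ hxU
  obtain ⟨u', hu', hu'eq⟩ := hU hxU
  obtain ⟨k', hk', hk'eq⟩ := hK hx₀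
  have : γ p (ξ x₀ p t) ∈ Reach ξ K' p_v 0 T' ∩ U' := by
    constructor
    · refine ⟨γ p x₀, ?_, t, ⟨ht0, htT.trans hTT'⟩, hsym p x₀ t ht0⟩
      rw [← hk'eq]; simpa using hk'
    · have : γ p (ξ x₀ p t) = u' := by
        rw [← hu'eq]; simp
      rw [this]; exact hu'
  rw [hcache] at this
  exact this
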